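/- If a string B occurs in a text W at two positions x and y with x < y and the occurrences overlap (i.e., y < x + |B|), then B is a concatenation of copies of the period P = W[x : y-1] (of length p = y - x), i.e., B = P^k P' where k = floor(|B| / p) and P' is the prefix of P of length |B| mod p. -/

import Mathlib

/-- `Q` occurs in `W` at (1-indexed) position `i`. -/
def Occurs {α : Type*} (Q W : List α) (i : ℕ) : Prop :=
  1 ≤ i ∧ i + Q.length - 1 ≤ W.length ∧ (W.drop (i - 1)).take Q.length = Q

/-- k-fold concatenation of `P`. -/
def RepPow {α : Type*} (P : List α) (k : ℕ) : List α :=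
  (List.replicate k P).flatten

lemma repPow_succ {α : Type*} (P : List α) (k : ℕ) :
    RepPow P (k + 1) = P ++ RepPow P k := by
  simp [RepPow, List.replicate_succ]

lemma prefix_repPow_aux {α : Type*} (P : List α) (hp : 0 < P.length) :
    ∀ n, ∀ B : List α, B.length ≤ n → B <+: P ++ B →
      B = RepPow P (B.length / P.length) ++ P.take (B.length % P.length) := by
  intro n
  induction n with
  | zero =>
      intro B hB _
      have : B = [] := List.length_eq_zero_iff.mp (Nat.le_zero.mp hB)
      subst this
      simp [RepPow]
  | succ n ih =>
      intro B hB h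
      have hBt := List.prefix_iff_eq_take.mp h
      by_cases hlen : B.length < P.length
      · have hk : B.length / P.length = 0 := Nat.div_eq_of_lt hlen
        have hr : B.length % P.length = B.length := Nat.mod_eq_of_lt hlen
        rw [hk, hr]
        rw [List.take_append_of_le_length (le_of_lt hlen)] at hBt
        simpa [RepPow] using hBt
      · push_neg at hlen
        rw [List.take_append, List.take_of_length_le hlen] at hBt
        set B' := B.take (B.length - P.length) with hB'
        have hB'len : B'.length = B.length - P.length := by
          simp [hB', Nat.sub_le]
        have hpre : B' <+: P ++ B' := by
          rw [← hBt]; exact List.take_prefix _ _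
        have hB'n : B'.length ≤ n := by
          rw [hB'len]; omega
        have hrec := ih B' hB'n hpre
        have hlenB : B.length = B'.length + P.length := by
          rw [hB'len]; omega
        have hdiv : B.length / P.length = B'.length / P.length + 1 := by
          rw [hlenB, Nat.add_div_right _ hp]
        have hmod : B.length % P.length = B'.length % P.length := by
          rw [hlenB, Nat.add_mod_right]
        rw [hdiv, hmod, repPow_succ, List.append_assoc, ← hrec]
        exact hBt

/-- overlapping occurrences force a periodic decomposition. -/
theorem overlap_periodic_decomposition {α : Type*} (W B : List α) (x y : ℕ)
    (hx : Occurs B W x) (hy : Occurs B W y) (hxy : x < y)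
    (hov : y < x + B.length) :
    B = RepPow ((W.drop (x - 1)).take (y - x)) (B.length / (y - x)) ++
        ((W.drop (x - 1)).take (y - x)).take (B.length % (y - x)) := by
  obtain ⟨hx1, hx2, hx3⟩ := hx
  obtain ⟨hy1, hy2, hy3⟩ := hy
  set p := y - x with hp
  set V := W.drop (x - 1) with hV
  set P := V.take p with hPdef
  have hp0 : 0 < p := by omega
  have hpB : p < B.length := by omega
  have hWlen : p ≤ V.length := by
    rw [hV, List.length_drop]; omega
  have hPlen : P.length = p := by
    rw [hPdef, List.length_take]; omega
  have hdropV : W.drop (y - 1) = V.drop p := by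
    rw [hV, List.drop_drop]
    congr 1
    omega
  have hBx : B = V.take B.length := hx3.symm
  have hBy : B = (V.drop p).take B.length := by
    rw [← hdropV]; exact hy3.symm
  have hsplit : V.take B.length = P ++ (V.drop p).take (B.length - p) := by
    conv_lhs => rw [show B.length = p + (B.length - p) by omega, List.take_add]
  have hBtake : B.take (B.length - p) = (V.drop p).take (B.length - p) := by
    nth_rewrite 2 [hBy]
    rw [List.take_take]
    congr 1
    omega
  have hkey : (P ++ B).take B.length = B := by
    rw [List.take_append, List.take_of_length_le (by omega : P.length ≤ B.length),
      hPlen, hBtake, ← hsplit, ← hBx]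
  have hpre : B <+: P ++ B := List.prefix_iff_eq_take.mpr hkey.symm
  have := prefix_repPow_aux P (by omega) B.length B le_rfl hpre
  rw [hPlen] at this
  exact this
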